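/- arXiv:2202.12440 — 3 statements merged into one kernel-verified Lean document; each statement's English description precedes it below -/
import Mathlib

section
/- Suppose the structural equation f_A satisfies the strong non-sensitive condition f_A(s, u) = g(s) + h(u) for functions g : 𝒮 → ℝ and h : ℝ → ℝ, with E[h(U_A)] finite. Then the orthogonalized value P_O(s, f_A(s, u)) = f_A(s, u) − E[A | S = s] + E[A] equals h(u) − E[h(U_A)] + E[A] and hence does not depend on s, where A = f_A(S, U_A) and U_A is independent of S. -/
open MeasureTheory ProbabilityTheory

/-- Under the strong non-sensitive condition `f_A(s,u) = g(s) + h(u)`, with `U_A`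
independent of `S`, the orthogonalized value
`P_O(s, f_A(s,u)) = f_A(s,u) − E[A | S = s] + E[A]` equals `h(u) − E[h(U_A)] + E[A]`,
and hence does not depend on `s`. -/
theorem stmt_5 {Ω : Type*} [MeasurableSpace Ω]
    (μ : Measure Ω) [IsProbabilityMeasure μ]
    {𝒮 : Type*} [Fintype 𝒮] [MeasurableSpace 𝒮] [MeasurableSingletonClass 𝒮]
    (S : Ω → 𝒮) (UA : Ω → ℝ) (hSm : Measurable S) (hUAm : Measurable UA)
    (g : 𝒮 → ℝ) (h : ℝ → ℝ) (hhm : Measurable h)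
    (hInt : Integrable (fun ω => h (UA ω)) μ)
    (hindep : IndepFun S UA μ)
    (hpos : ∀ s : 𝒮, μ {ω | S ω = s} ≠ 0)
    (s : 𝒮) (u : ℝ) :
    (g s + h u) - (⨍ ω in {ω | S ω = s}, (g (S ω) + h (UA ω)) ∂μ)
        + (∫ ω, (g (S ω) + h (UA ω)) ∂μ)
      = h u - (∫ ω, h (UA ω) ∂μ) + (∫ ω, (g (S ω) + h (UA ω)) ∂μ) := by
  classical
  set E : Set Ω := {ω | S ω = s} with hE
  have hEm : MeasurableSet E := hSm (measurableSet_singleton s)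
  have hμE : μ E ≠ ⊤ := measure_ne_top μ E
  have hμEr : (μ E).toReal ≠ 0 := by
    simp [ENNReal.toReal_ne_zero, hpos s, hμE]
    exact hpos s
  -- indicator function
  set χ : Ω → ℝ := fun ω => if S ω = s then 1 else 0 with hχ
  have hχ_comp : χ = (fun x : 𝒮 => if x = s then (1:ℝ) else 0) ∘ S := rfl
  have hχ_indep : IndepFun χ (fun ω => h (UA ω)) μ := by
    rw [hχ_comp]
    exact hindep.comp (measurable_const.ite (measurableSet_singleton s) measurable_const) hhm
  have hχ_int : Integrable χ μ := by
    have : χ = E.indicator (fun _ => (1:ℝ)) := by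
      funext ω; by_cases hw : S ω = s <;> simp [hχ, hE, Set.indicator, hw]
    rw [this]
    exact (integrable_const 1).indicator hEm
  have hmul : ∫ ω, χ ω * h (UA ω) ∂μ = (∫ ω, χ ω ∂μ) * ∫ ω, h (UA ω) ∂μ :=
    hχ_indep.integral_fun_mul_eq_mul_integral hχ_int.aestronglyMeasurable hInt.aestronglyMeasurable
  have hχint : ∫ ω, χ ω ∂μ = (μ E).toReal := by
    have : χ = E.indicator (fun _ => (1:ℝ)) := by
      funext ω; by_cases hw : S ω = s <;> simp [hχ, hE, Set.indicator, hw]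
    rw [this, integral_indicator hEm]
    simp
    rfl
  have hset : ∫ ω in E, h (UA ω) ∂μ = (μ E).toReal * ∫ ω, h (UA ω) ∂μ := by
    rw [← hχint, ← hmul, ← integral_indicator hEm]
    congr 1
    funext ω; by_cases hw : S ω = s <;> simp [hχ, hE, Set.indicator, hw]
  have hgset : ∫ ω in E, g (S ω) ∂μ = (μ E).toReal * g s := by
    have : ∀ᵐ ω ∂(μ.restrict E), g (S ω) = g s := by
      filter_upwards [ae_restrict_mem hEm] with ω hw
      rw [hw]
    rw [integral_congr_ae this]
    simp [mul_comm]
    exact Or.inl rfl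
  have hgmeas : Measurable fun ω => g (S ω) :=
    (measurable_of_countable g).comp hSm
  have hgint : Integrable (fun ω => g (S ω)) μ := by
    have hne : (Finset.univ : Finset 𝒮).Nonempty := ⟨s, Finset.mem_univ s⟩
    refine Integrable.mono' (integrable_const (Finset.univ.sup' hne fun x => |g x|))
      hgmeas.aestronglyMeasurable ?_
    filter_upwards with ω
    exact Finset.le_sup' (fun x => |g x|) (Finset.mem_univ (S ω))
  have hEint : ∫ ω in E, (g (S ω) + h (UA ω)) ∂μ
      = (μ E).toReal * (g s + ∫ ω, h (UA ω) ∂μ) := by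
    rw [integral_add (hgint.restrict) (hInt.restrict), hgset, hset, mul_add]
  have havg : (⨍ ω in E, (g (S ω) + h (UA ω)) ∂μ) = g s + ∫ ω, h (UA ω) ∂μ := by
    rw [average_eq, smul_eq_mul, hEint, measureReal_restrict_apply_univ, measureReal_def, ← mul_assoc,
      inv_mul_cancel₀ hμEr, one_mul]
  rw [havg]; ring
end

section
/- In Example 1, the counterfactual income under intervention S := 1 given observed S = 0 and A = a* equals c₁ (a*/c₁)^{σ_a} e^{λ_a + (1 − σ_a) c₂}; in particular it equals a* for all a* > 0 if and only if σ_a = 1 and λ_a = 0. -/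
/-- In Example 1, the counterfactual income under the intervention `S := 1`, given the
observed `S = 0` and `A = a*` (so `U_A = u* = (log(a*/c₁) − c₂)/c₃`), equals
`c₁ (a*/c₁)^{σ_a} e^{λ_a + (1 − σ_a) c₂}`; and it equals `a*` for all `a* > 0`
if and only if `σ_a = 1` and `λ_a = 0`. -/
theorem stmt_14 (c₁ c₂ c₃ lam σa : ℝ) (hc₁ : 0 < c₁) (hc₃ : 0 < c₃) (hσ : 0 < σa) :
    (∀ astar : ℝ, 0 < astar →
      c₁ * Real.exp (c₂ + lam + c₃ * σa * ((Real.log (astar / c₁) - c₂) / c₃))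
        = c₁ * (astar / c₁) ^ σa * Real.exp (lam + (1 - σa) * c₂)) ∧
    ((∀ astar : ℝ, 0 < astar →
        c₁ * Real.exp (c₂ + lam + c₃ * σa * ((Real.log (astar / c₁) - c₂) / c₃)) = astar)
      ↔ (σa = 1 ∧ lam = 0)) := by
  have hexp : ∀ L : ℝ, c₂ + lam + c₃ * σa * ((L - c₂) / c₃)
      = σa * L + (lam + (1 - σa) * c₂) := by
    intro L; field_simp; ring
  constructor
  · intro a ha
    have hd : 0 < a / c₁ := div_pos ha hc₁
    rw [hexp, Real.exp_add, Real.rpow_def_of_pos hd, ← mul_assoc]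
    ring_nf
  · constructor
    · intro h
      have key : ∀ x : ℝ, c₂ + lam + σa * (x - c₂) = x := by
        intro x
        have hx : 0 < c₁ * Real.exp x := by positivity
        have := h _ hx
        rw [mul_comm c₁ (Real.exp x), mul_div_assoc, div_self hc₁.ne', mul_one,
          Real.log_exp, mul_comm (Real.exp x) c₁] at this
        have h2 := mul_left_cancel₀ hc₁.ne' this
        have h3 := Real.exp_injective h2
        have h4 : c₃ * σa * ((x - c₂) / c₃) = σa * (x - c₂) := by field_simp
        rw [h4] at h3
        linarith [h3]
      have k0 := key c₂
      have k1 := key (c₂ + 1)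
      constructor
      · linarith
      · linarith
    · rintro ⟨h1, h2⟩ a ha
      subst h1 h2
      have hd : 0 < a / c₁ := div_pos ha hc₁
      rw [hexp, Real.log_div ha.ne' hc₁.ne']
      simp [Real.exp_sub, Real.exp_log ha, Real.exp_log hc₁]
      field_simp
end

section
/- If the decision function takes the form q(s, a) = expit(β₀ + β_a a + β_s s) and A = f_A(S, U_A) with the marginal-distribution-mapping invariance f_A(s', u) depending on s' (i.e., f_A(1, u) ≠ f_A(0, u) for some u with positive probability) or β_s ≠ 0, then Y = 1{U_Y < q(S, A)} is not counterfactually fair; conversely in Example 1, Y is counterfactually fair if σ_a = 1, λ_a = 0 and β_s = 0. -/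
open MeasureTheory ProbabilityTheory

/-- Example 1 SCM: `S = 1{U_S < 0.7}`, `A = c₁ exp(c₂ + λ_a S + c₃ σ_a^S U_A)` with `U_A`
standard normal, `Y = 1{U_Y < expit(β₀ + β_a A + β_s S)}` with `β_a ≠ 0`. If `β_s ≠ 0` or
`f_A(1,·) ≠ f_A(0,·)` somewhere, then `Y` is not counterfactually fair; conversely if
`σ_a = 1`, `λ_a = 0` and `β_s = 0` then `Y` is counterfactually fair. -/
theorem stmt_18 {Ω : Type*} [MeasurableSpace Ω]
    (μ : Measure Ω) [IsProbabilityMeasure μ]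
    (US UA UY : Ω → ℝ)
    (hUSm : Measurable US) (hUAm : Measurable UA) (hUYm : Measurable UY)
    (hUS : Measure.map US μ = volume.restrict (Set.Ioo (0 : ℝ) 1))
    (hUA : Measure.map UA μ = gaussianReal 0 1)
    (hUY : Measure.map UY μ = volume.restrict (Set.Ioo (0 : ℝ) 1))
    (hindepSA : IndepFun US UA μ)
    (hindepY : IndepFun (fun ω => (US ω, UA ω)) UY μ)
    (c₁ c₂ c₃ lam σa β₀ βa βs : ℝ)
    (hc₁ : 0 < c₁) (hc₃ : 0 < c₃) (hσ : 0 < σa) (hβa : βa ≠ 0) :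
    let expit : ℝ → ℝ := fun u => (1 + Real.exp (-u))⁻¹
    let fA : ℝ → ℝ → ℝ := fun s u => c₁ * Real.exp (c₂ + lam * s + c₃ * σa ^ s * u)
    let S : Ω → ℝ := fun ω => if US ω < 0.7 then 1 else 0
    let A : Ω → ℝ := fun ω => fA (S ω) (UA ω)
    let Ycf : ℝ → Ω → ℝ := fun s' ω =>
      if UY ω < expit (β₀ + βa * fA s' (UA ω) + βs * s') then 1 else 0
    let m : MeasurableSpace Ω :=
      MeasurableSpace.comap (fun ω => (S ω, A ω)) inferInstance
    let CF : Prop := ∀ s' s'' : ℝ, (s' = 0 ∨ s' = 1) → (s'' = 0 ∨ s'' = 1) →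
      μ[Ycf s' | m] =ᵐ[μ] μ[Ycf s'' | m]
    ((βs ≠ 0 ∨ ∃ u : ℝ, fA 1 u ≠ fA 0 u) → ¬ CF) ∧
    ((σa = 1 ∧ lam = 0 ∧ βs = 0) → CF) := by
  rename_i mΩ hPM
  intro expit fA S A Ycf m CF
  letI : MeasurableSpace Ω := mΩ
  -- basic facts about expit
  have hexpit_mem : ∀ x : ℝ, expit x ∈ Set.Ioo (0:ℝ) 1 := by
    intro x
    have h := Real.exp_pos (-x)
    constructor
    · positivity
    · rw [inv_lt_one_iff₀]; right; linarith
  have hexpit_inj : Function.Injective expit := by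
    intro a b h
    simp only [expit, inv_inj] at h
    have := Real.exp_injective (by linarith : Real.exp (-a) = Real.exp (-b))
    linarith
  have hexpit_cont : Continuous expit := by
    apply Continuous.inv₀
    · exact continuous_const.add (Real.continuous_exp.comp continuous_neg)
    · intro x
      have h := Real.exp_pos (-x)
      positivity
  -- g s' u : the conditional success probability
  set g : ℝ → ℝ → ℝ := fun s' u => expit (β₀ + βa * fA s' u + βs * s') with hg_def
  have hfA_cont : ∀ s', Continuous (fun u => fA s' u) := by
    intro s'
    show Continuous (fun u => c₁ * Real.exp (c₂ + lam * s' + c₃ * σa ^ s' * u))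
    fun_prop
  have hg_cont : ∀ s', Continuous (g s') := by
    intro s'
    apply hexpit_cont.comp
    exact (continuous_const.add (continuous_const.mul (hfA_cont s'))).add continuous_const
  -- measurability of the rpow map
  have hrpow : Measurable (fun x : ℝ => σa ^ x) := by
    have : (fun x : ℝ => σa ^ x) = fun x => Real.exp (Real.log σa * x) :=
      funext fun x => Real.rpow_def_of_pos hσ x
    rw [this]
    exact Real.measurable_exp.comp (measurable_const.mul measurable_id)
  -- measurability of S and A
  have hSm : Measurable S := by
    show Measurable (fun ω => if US ω < 0.7 then (1:ℝ) else 0)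
    exact Measurable.ite (measurableSet_lt hUSm measurable_const) measurable_const
      measurable_const
  have hAm : Measurable A := by
    show Measurable (fun ω => c₁ * Real.exp (c₂ + lam * S ω + c₃ * σa ^ S ω * UA ω))
    apply Measurable.const_mul
    apply Real.measurable_exp.comp
    exact ((measurable_const.add (hSm.const_mul lam)).add
      (((hrpow.comp hSm).const_mul c₃).mul hUAm))
  have hSA : Measurable (fun ω => (S ω, A ω)) := hSm.prodMk hAm
  have hm : m ≤ mΩ := hSA.comap_le
  -- UA is m-measurable via inversion
  have hUA_comap : ∀ C : Set ℝ, MeasurableSet C → MeasurableSet[m] (UA ⁻¹' C) := by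
    intro C hC
    set φ : ℝ × ℝ → ℝ := fun p => (Real.log (p.2 / c₁) - c₂ - lam * p.1) / (c₃ * σa ^ p.1)
      with hφ_def
    have hφm : Measurable φ := by
      apply Measurable.div
      · exact ((Real.measurable_log.comp (measurable_snd.div measurable_const)).sub
          measurable_const).sub (measurable_const.mul measurable_fst)
      · exact (hrpow.comp measurable_fst).const_mul c₃
    have hinv : ∀ ω, φ (S ω, A ω) = UA ω := by
      intro ω
      have hσpos : (0:ℝ) < σa ^ S ω := Real.rpow_pos_of_pos hσ _
      have hA : A ω / c₁ = Real.exp (c₂ + lam * S ω + c₃ * σa ^ S ω * UA ω) := by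
        show fA (S ω) (UA ω) / c₁ = _
        show c₁ * Real.exp (c₂ + lam * S ω + c₃ * σa ^ S ω * UA ω) / c₁ = _
        field_simp
      simp only [hφ_def, hA, Real.log_exp]
      field_simp
      ring
    refine ⟨φ ⁻¹' C, hφm hC, ?_⟩
    ext ω
    simp [hinv ω]
  constructor
  · -- negation direction
    rintro hyp hCF
    -- the key integral identity
    have key : ∀ s' : ℝ, ∀ C : Set ℝ, MeasurableSet C →
        ∫ ω in UA ⁻¹' C, Ycf s' ω ∂μ
          = (∫⁻ u in C, ENNReal.ofReal (g s' u) ∂(gaussianReal 0 1)).toReal := by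
      intro s' C hC
      have hTmeas : MeasurableSet {ω | UY ω < g s' (UA ω)} :=
        measurableSet_lt hUYm ((hg_cont s').measurable.comp hUAm)
      have hYeq : (fun ω => Ycf s' ω)
          = Set.indicator {ω | UY ω < g s' (UA ω)} (fun _ => (1:ℝ)) := by
        funext ω
        simp only [Ycf, Set.indicator_apply, Set.mem_setOf_eq, hg_def]
      rw [hYeq]
      rw [integral_indicator_const (1:ℝ) hTmeas, measureReal_def, Measure.restrict_apply hTmeas,
        smul_eq_mul, mul_one]
      -- rewrite the set as preimage under the pair map
      have hset : {ω | UY ω < g s' (UA ω)} ∩ UA ⁻¹' C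
          = (fun ω => (UA ω, UY ω)) ⁻¹' {p : ℝ × ℝ | p.1 ∈ C ∧ p.2 < g s' p.1} := by
        ext ω
        simp only [Set.mem_inter_iff, Set.mem_setOf_eq, Set.mem_preimage]
        tauto
      have hD : MeasurableSet {p : ℝ × ℝ | p.1 ∈ C ∧ p.2 < g s' p.1} :=
        (hC.preimage measurable_fst).inter
          (measurableSet_lt measurable_snd ((hg_cont s').measurable.comp measurable_fst))
      have hindepAY : IndepFun UA UY μ := hindepY.comp measurable_snd measurable_id
      have hmap : Measure.map (fun ω => (UA ω, UY ω)) μ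
          = (gaussianReal 0 1).prod (volume.restrict (Set.Ioo (0:ℝ) 1)) := by
        rw [← hUA, ← hUY]
        exact (indepFun_iff_map_prod_eq_prod_map_map hUAm.aemeasurable
          hUYm.aemeasurable).mp hindepAY
      rw [hset, ← Measure.map_apply (hUAm.prodMk hUYm) hD, hmap,
        Measure.prod_apply hD]
      congr 1
      have hslice : ∀ u : ℝ, (volume.restrict (Set.Ioo (0:ℝ) 1))
          (Prod.mk u ⁻¹' {p : ℝ × ℝ | p.1 ∈ C ∧ p.2 < g s' p.1})
          = C.indicator (fun u => ENNReal.ofReal (g s' u)) u := by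
        intro u
        by_cases hu : u ∈ C
        · have h1 : Prod.mk u ⁻¹' {p : ℝ × ℝ | p.1 ∈ C ∧ p.2 < g s' p.1}
              = Set.Iio (g s' u) := by
            ext y; simp [hu]
          rw [h1, Set.indicator_of_mem hu, Measure.restrict_apply measurableSet_Iio]
          have hmem := hexpit_mem (β₀ + βa * fA s' u + βs * s')
          have h2 : Set.Iio (g s' u) ∩ Set.Ioo 0 1 = Set.Ioo 0 (g s' u) := by
            ext y
            simp only [Set.mem_inter_iff, Set.mem_Iio, Set.mem_Ioo]
            constructor
            · rintro ⟨h3, h4, h5⟩; exact ⟨h4, h3⟩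
            · rintro ⟨h3, h4⟩
              exact ⟨h4, h3, lt_trans h4 hmem.2⟩
          rw [h2, Real.volume_Ioo, sub_zero]
        · have h1 : Prod.mk u ⁻¹' {p : ℝ × ℝ | p.1 ∈ C ∧ p.2 < g s' p.1} = ∅ := by
            ext y; simp [hu]
          rw [h1, Set.indicator_of_notMem hu]
          simp
      rw [lintegral_congr hslice, lintegral_indicator hC]
    -- integrability
    have hint : ∀ s' : ℝ, Integrable (Ycf s') μ := by
      intro s'
      have hTmeas : MeasurableSet {ω | UY ω < g s' (UA ω)} :=
        measurableSet_lt hUYm ((hg_cont s').measurable.comp hUAm)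
      have hYeq : (fun ω => Ycf s' ω)
          = Set.indicator {ω | UY ω < g s' (UA ω)} (fun _ => (1:ℝ)) := by
        funext ω
        simp only [Ycf, Set.indicator_apply, Set.mem_setOf_eq, hg_def]
      rw [show Ycf s' = (fun ω => Ycf s' ω) from rfl, hYeq]
      exact (integrable_const (1:ℝ)).indicator hTmeas
    have hfin : ∀ s' : ℝ, ∀ C : Set ℝ,
        (∫⁻ u in C, ENNReal.ofReal (g s' u) ∂(gaussianReal 0 1)) ≠ ⊤ := by
      intro s' C
      refine ne_top_of_le_ne_top ?_ (lintegral_mono fun u =>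
        ENNReal.ofReal_le_one.mpr (le_of_lt (hexpit_mem _).2))
      rw [setLIntegral_const]
      exact ENNReal.mul_ne_top ENNReal.one_ne_top (measure_ne_top _ _)
    have hsetint : ∀ C : Set ℝ, MeasurableSet C →
        (∫⁻ u in C, ENNReal.ofReal (g 1 u) ∂(gaussianReal 0 1))
          = (∫⁻ u in C, ENNReal.ofReal (g 0 u) ∂(gaussianReal 0 1)) := by
      intro C hC
      have h10 := hCF 1 0 (Or.inr rfl) (Or.inl rfl)
      have hB : MeasurableSet[m] (UA ⁻¹' C) := hUA_comap C hC
      have h1 : ∫ ω in UA ⁻¹' C, (μ[Ycf 1 | m]) ω ∂μ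
          = ∫ ω in UA ⁻¹' C, (μ[Ycf 0 | m]) ω ∂μ :=
        integral_congr_ae (ae_restrict_of_ae h10)
      rw [setIntegral_condExp hm (hint 1) hB, setIntegral_condExp hm (hint 0) hB] at h1
      rw [key 1 C hC, key 0 C hC] at h1
      exact (ENNReal.toReal_eq_toReal_iff' (hfin 1 C) (hfin 0 C)).mp h1
    have hae : (fun u => ENNReal.ofReal (g 1 u)) =ᵐ[gaussianReal 0 1]
        (fun u => ENNReal.ofReal (g 0 u)) := by
      refine ae_eq_of_forall_setLIntegral_eq_of_sigmaFinite ?_ ?_ fun s hs _ => hsetint s hs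
      · exact ENNReal.measurable_ofReal.comp (hg_cont 1).measurable
      · exact ENNReal.measurable_ofReal.comp (hg_cont 0).measurable
    -- everywhere equality via full support
    have hvolae : ∀ᵐ u ∂(volume : Measure ℝ), g 1 u = g 0 u := by
      have habs : (volume : Measure ℝ) ≪ gaussianReal 0 1 :=
        gaussianReal_absolutelyContinuous' 0 one_ne_zero
      have h2 := habs.ae_eq hae
      filter_upwards [h2] with u hu
      have h1 := (hexpit_mem (β₀ + βa * fA 1 u + βs * 1)).1.le
      have h0 := (hexpit_mem (β₀ + βa * fA 0 u + βs * 0)).1.le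
      exact (ENNReal.ofReal_eq_ofReal_iff h1 h0).mp hu
    have hall : ∀ u : ℝ, g 1 u = g 0 u := by
      by_contra hne
      push_neg at hne
      obtain ⟨u₀, hu₀⟩ := hne
      have hopen : IsOpen {u : ℝ | ¬ g 1 u = g 0 u} := by
        have he : {u : ℝ | ¬ g 1 u = g 0 u} = (fun u => g 1 u - g 0 u) ⁻¹' {0}ᶜ := by
          ext u; simp [sub_eq_zero]
        rw [he]
        exact ((hg_cont 1).sub (hg_cont 0)).isOpen_preimage _ isClosed_singleton.isOpen_compl
      have hzero : volume {u : ℝ | ¬ g 1 u = g 0 u} = 0 := ae_iff.mp hvolae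
      have hpos : 0 < volume {u : ℝ | ¬ g 1 u = g 0 u} :=
        hopen.measure_pos volume ⟨u₀, hu₀⟩
      exact absurd hzero hpos.ne'
    -- deduce βs = 0 and fA 1 = fA 0
    have hlin : ∀ u : ℝ, fA 1 u - fA 0 u = -βs / βa := by
      intro u
      have h : β₀ + βa * fA 1 u + βs * 1 = β₀ + βa * fA 0 u + βs * 0 :=
        hexpit_inj (hall u)
      rw [eq_div_iff hβa]
      linear_combination h
    have htend : Filter.Tendsto (fun u : ℝ => fA 1 u - fA 0 u) Filter.atBot (nhds 0) := by
      have haux : ∀ s : ℝ, Filter.Tendsto (fun u : ℝ => fA s u) Filter.atBot (nhds 0) := by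
        intro s
        have hk : (0:ℝ) < c₃ * σa ^ s := by
          have := Real.rpow_pos_of_pos hσ s
          positivity
        have h1 : Filter.Tendsto (fun u : ℝ => c₂ + lam * s + c₃ * σa ^ s * u)
            Filter.atBot Filter.atBot := by
          apply Filter.tendsto_atBot_add_const_left
          exact (Filter.tendsto_const_mul_atBot_of_pos hk).mpr Filter.tendsto_id
        have h2 := (Real.tendsto_exp_atBot).comp h1
        have h3 := h2.const_mul c₁
        simpa using h3
      have := (haux 1).sub (haux 0)
      simpa using this
    have hconst : Filter.Tendsto (fun _ : ℝ => -βs / βa) Filter.atBot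
        (nhds (0:ℝ)) := by
      have he : (fun u : ℝ => fA 1 u - fA 0 u) = fun _ : ℝ => -βs / βa := funext hlin
      rwa [he] at htend
    have hβs0 : βs = 0 := by
      have h0 : -βs / βa = 0 := tendsto_nhds_unique tendsto_const_nhds hconst
      field_simp at h0
      linarith
    have hfAeq : ∀ u : ℝ, fA 1 u = fA 0 u := by
      intro u
      have h := hlin u
      rw [hβs0] at h
      simp at h
      linarith
    rcases hyp with h | ⟨u, hu⟩
    · exact h hβs0
    · exact hu (hfAeq u)
  · -- positive direction
    rintro ⟨hσ1, hlam, hβs⟩ s' s'' _ _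
    have he : Ycf s' = Ycf s'' := by
      funext ω
      simp only [Ycf, fA, expit, hσ1, hlam, hβs, Real.one_rpow, zero_mul, mul_zero,
        mul_one, add_zero]
    rw [he]
end
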